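/- Let F be a field, m and E finite types, D a matrix over F with rows indexed by m and columns indexed by E; for S ⊆ E let r(S) be the rank of the submatrix of columns in S, and let T_D(X,Y) = Σ_{S ⊆ E} X^{r(E) − r(S)} · Y^{|S| − r(S)}. If σ ∈ E is a loop of D, i.e., the column Dσ is the zero vector, then T_D(X,Y) = (Y + 1) · T_{D∖σ}(X,Y), where D∖σ is the submatrix of D with columns E ∖ {σ}. -/
import Mathlib


open MvPolynomial

/-- The rank of the family of vectors `(v σ)_{σ ∈ S}`. -/
noncomputable def famRank (F : Type*) [Field F] {N : Type*} [AddCommGroup N] [Module F N]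
    {E : Type*} (v : E → N) (S : Finset E) : ℕ :=
  Module.finrank F (Submodule.span F (v '' (S : Set E)))

/-- The corank–nullity (Tutte–Krushkal–Renardy) polynomial of a family of vectors:
`T_v(X,Y) = Σ_{S ⊆ E} X^(r(E) − r(S)) · Y^(|S| − r(S))`. -/
noncomputable def famTutte (F : Type*) [Field F] {N : Type*} [AddCommGroup N] [Module F N]
    {E : Type*} [Fintype E] (v : E → N) : MvPolynomial (Fin 2) ℤ :=
  ∑ S : Finset E,
    X 0 ^ (famRank F v Finset.univ - famRank F v S) * X 1 ^ (S.card - famRank F v S)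

lemma famRank_le_card (F : Type*) [Field F] {N : Type*} [AddCommGroup N] [Module F N]
    {E : Type*} (v : E → N) (S : Finset E) [DecidableEq N] :
    famRank F v S ≤ S.card := by
  unfold famRank
  have h1 : v '' (S : Set E) = ((S.image v : Finset N) : Set N) := by
    rw [Finset.coe_image]
  rw [h1]
  exact le_trans (finrank_span_finset_le_card (R := F) (S.image v)) Finset.card_image_le

/-- if `σ ∈ E` is a loop of `D` (its column is the zero vector), then
`T_D(X,Y) = (Y + 1) · T_{D∖σ}(X,Y)`, where `D∖σ` is the submatrix of `D` with columns
`E ∖ {σ}`. -/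
theorem statement9 {F : Type*} [Field F] {m E : Type*} [Fintype m] [Fintype E]
    [DecidableEq E] (D : Matrix m E F) (σ : E)
    (hloop : (fun i => D i σ) = (0 : m → F)) :
    famTutte F (fun τ i => D i τ)
      = (X 1 + 1) * famTutte F (fun (τ : {x : E // x ≠ σ}) (i : m) => D i (τ : E)) := by
  classical
  set v : E → (m → F) := fun τ i => D i τ with hv
  set v' : {x : E // x ≠ σ} → (m → F) := fun τ i => D i (τ : E) with hv'
  have hvσ : v σ = 0 := hloop
  -- rank of mapped subtype finsets
  have hemb : ∀ T : Finset {x : E // x ≠ σ},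
      famRank F v' T = famRank F v (T.map (Function.Embedding.subtype _)) := by
    intro T
    unfold famRank
    have himg : v' '' (T : Set {x : E // x ≠ σ})
        = v '' ((T.map (Function.Embedding.subtype _) : Finset E) : Set E) := by
      rw [Finset.coe_map, ← Set.image_comp]
      rfl
    rw [himg]
  -- inserting a loop doesn't change rank
  have hins : ∀ S : Finset E, famRank F v (insert σ S) = famRank F v S := by
    intro S
    unfold famRank
    rw [Finset.coe_insert, Set.image_insert_eq, hvσ, Submodule.span_insert_zero]
  set e : Finset E := Finset.univ.erase σ with he
  have hσe : σ ∉ e := Finset.notMem_erase σ _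
  have huniv_map : (Finset.univ.map (Function.Embedding.subtype (fun x => x ≠ σ))) = e := by
    ext x
    simp [he]
  have huniv2 : famRank F v Finset.univ = famRank F v e := by
    conv_lhs => rw [← Finset.insert_erase (Finset.mem_univ σ)]
    exact hins _
  have huniv : famRank F v' Finset.univ = famRank F v Finset.univ := by
    rw [hemb, huniv_map, huniv2]
  -- rewrite LHS as a sum over the powerset of univ
  unfold famTutte
  rw [← Finset.powerset_univ]
  rw [show (Finset.univ : Finset E) = insert σ e from (Finset.insert_erase (Finset.mem_univ σ)).symm]
  rw [Finset.sum_powerset_insert hσe]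
  rw [show insert σ e = Finset.univ from Finset.insert_erase (Finset.mem_univ σ)]
  -- the sum over sets containing σ
  have hterm : ∀ S ∈ e.powerset,
      (X 0 ^ (famRank F v Finset.univ - famRank F v (insert σ S))
        * X 1 ^ ((insert σ S).card - famRank F v (insert σ S)) : MvPolynomial (Fin 2) ℤ)
      = X 1 * (X 0 ^ (famRank F v Finset.univ - famRank F v S)
        * X 1 ^ (S.card - famRank F v S)) := by
    intro S hS
    have hσS : σ ∉ S := fun h => hσe (Finset.mem_powerset.mp hS h)
    rw [hins S, Finset.card_insert_of_notMem hσS]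
    have hle : famRank F v S ≤ S.card := famRank_le_card F v S
    rw [Nat.succ_sub hle, pow_succ]
    ring
  rw [Finset.sum_congr rfl hterm, ← Finset.mul_sum]
  -- the RHS sum equals the sum over the powerset of e
  have hRHS : (∑ T : Finset {x : E // x ≠ σ},
      (X 0 ^ (famRank F v' Finset.univ - famRank F v' T)
        * X 1 ^ (T.card - famRank F v' T) : MvPolynomial (Fin 2) ℤ))
      = ∑ S ∈ e.powerset,
        (X 0 ^ (famRank F v Finset.univ - famRank F v S)
          * X 1 ^ (S.card - famRank F v S)) := by
    refine Finset.sum_bij (fun T _ => T.map (Function.Embedding.subtype _)) ?_ ?_ ?_ ?_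
    · intro T _
      rw [Finset.mem_powerset, ← huniv_map]
      exact Finset.map_subset_map.mpr (Finset.subset_univ T)
    · intro T₁ _ T₂ _ h
      exact Finset.map_injective _ h
    · intro S hS
      refine ⟨S.subtype (fun x => x ≠ σ), Finset.mem_univ _, ?_⟩
      ext x
      simp only [Finset.mem_map, Finset.mem_subtype, Function.Embedding.coe_subtype]
      constructor
      · rintro ⟨⟨y, hy⟩, hmem, rfl⟩; exact hmem
      · intro hx
        have hxσ : x ≠ σ := fun h => hσe (Finset.mem_powerset.mp hS (h ▸ hx))
        exact ⟨⟨x, hxσ⟩, hx, rfl⟩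
    · intro T _
      simp only [hemb, huniv_map, ← huniv2, Finset.card_map]
  rw [hRHS]
  ring
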